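/- Let E be a finite graph and v a vertex of E that is a sink or lies on a cycle. If w is another such vertex, then the ℤ-order ideals of T_E generated by v and w coincide (⟨v⟩ = ⟨w⟩) if and only if v ≥ w and w ≥ v (i.e., there are paths in both directions between v and w, or v = w). -/

import Mathlib

/-! Directed graphs are given by types `V` (vertices), `E` (edges) and maps
`s r : E → V` (source and range). -/

/-- `PathTo s r u v l` : the list of edges `l` is a path from `u` to `v`
(the empty list is the trivial path at `u = v`). -/
inductive PathTo {V E : Type*} (s r : E → V) : V → V → List E → Prop
  | nil (v : V) : PathTo s r v v []
  | cons (e : E) {w : V} {l : List E} :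
      PathTo s r (r e) w l → PathTo s r (s e) w (e :: l)

variable {V E : Type*}

/-- `u ≥ v` : there is a finite path from `u` to `v`. -/
def Reach (s r : E → V) (u v : V) : Prop := ∃ l : List E, PathTo s r u v l

/-- A subset of vertices is hereditary if it is closed under ranges of edges. -/
def Hereditary (s r : E → V) (H : Set V) : Prop := ∀ e : E, s e ∈ H → r e ∈ H

/-- A subset of vertices is saturated if it contains every regular vertex all of
whose out-neighbours lie in the set. -/
def Saturated (s r : E → V) (H : Set V) : Prop :=
  ∀ v : V, (∃ e, s e = v) → (∀ e, s e = v → r e ∈ H) → v ∈ H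

/-- `R(H)` : the set of vertices from which there is a finite path into `H`. -/
def ReachSet (s r : E → V) (H : Set V) : Set V := {u : V | ∃ v ∈ H, Reach s r u v}

/-- `T(w)` : the tree rooted at `w`, i.e. the set of vertices reachable from `w`. -/
def TreeOf (s r : E → V) (w : V) : Set V := {v : V | Reach s r w v}

/-- `H^⊥ = E⁰ \ R(H)`. -/
def Hperp (s r : E → V) (H : Set V) : Set V := Set.univ \ ReachSet s r H

/-- The hereditary and saturated closure of a set of vertices. -/
def HSClosure (s r : E → V) (X : Set V) : Set V :=
  ⋂₀ {S : Set V | X ⊆ S ∧ Hereditary s r S ∧ Saturated s r S}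

/-- A cycle: a nonempty closed path whose edges have pairwise distinct sources. -/
def IsCycle (s r : E → V) (l : List E) : Prop :=
  ∃ v : V, l ≠ [] ∧ PathTo s r v v l ∧ (l.map s).Nodup

/-- A path (given as a nonempty list of edges starting at `w`) flows to `H` if its
last edge has source outside `H` and range inside `H`. -/
def FlowsTo (s r : E → V) (H : Set V) (w : V) (l : List E) : Prop :=
  (∃ u : V, PathTo s r w u l) ∧ ∃ e : E, l.getLast? = some e ∧ s e ∉ H ∧ r e ∈ H

/-! ### The talented monoid of a row-finite graph -/

/-- The free commutative monoid on `V × ℤ`. -/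
abbrev FreeTal (V : Type*) := (V × ℤ) →₀ ℕ

/-- The defining relations of the talented monoid:
`v(i) = Σ_{e ∈ s⁻¹(v)} r(e)(i+1)` for every regular vertex `v` and `i ∈ ℤ`. -/
def talRel {V E : Type*} (s r : E → V) (hrow : ∀ v : V, {e : E | s e = v}.Finite) :
    FreeTal V → FreeTal V → Prop := fun x y =>
  ∃ (v : V) (i : ℤ), (∃ e, s e = v) ∧ x = Finsupp.single (v, i) 1 ∧
    y = ∑ e ∈ (hrow v).toFinset, Finsupp.single (r e, i + 1) 1

/-- The congruence generated by the defining relations. -/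
noncomputable def talCon {V E : Type*} (s r : E → V) (hrow : ∀ v : V, {e : E | s e = v}.Finite) :
    AddCon (FreeTal V) := addConGen (talRel s r hrow)

/-- The talented monoid `T_E` of a row-finite graph. -/
abbrev TalMon {V E : Type*} (s r : E → V) (hrow : ∀ v : V, {e : E | s e = v}.Finite) :=
  (talCon s r hrow).Quotient

/-- The generator `v(i)` of the talented monoid, for `p = (v, i)`. -/
noncomputable def talGen {V E : Type*} (s r : E → V) (hrow : ∀ v : V, {e : E | s e = v}.Finite)
    (p : V × ℤ) : TalMon s r hrow :=
  (talCon s r hrow).mk' (Finsupp.single p 1)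

section OrderNotions

variable {M : Type*} [AddCommMonoid M]

/-- The algebraic preorder: `a ≤ b` iff `b = a + c` for some `c`. -/
def AlgLE (a b : M) : Prop := ∃ c, b = a + c

/-- Strict algebraic order: `a < b` iff `b = a + c` for some nonzero `c`. -/
def AlgLT (a b : M) : Prop := ∃ c, c ≠ 0 ∧ b = a + c

/-- Comparability with respect to the algebraic order. -/
def CmpRel (a b : M) : Prop := a = b ∨ AlgLT a b ∨ AlgLT b a

/-- The orthogonal set `I^⊥ = {a | a ∥ I} ∪ {0}`. -/
def perpSet (I : Set M) : Set M :=
  {a : M | a = 0 ∨ ∀ x ∈ I, x ≠ 0 → ¬ CmpRel a x}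

end OrderNotions

/-- The ℤ-order ideal `⟨H⟩` of the talented monoid generated by a set of vertices `H`:
all elements below a finite sum of shifted generators `v(i)`, `v ∈ H`. -/
def genIdeal {V E : Type*} (s r : E → V) (hrow : ∀ v : V, {e : E | s e = v}.Finite)
    (H : Set V) : Set (TalMon s r hrow) :=
  {x | ∃ l : List (V × ℤ), (∀ p ∈ l, p.1 ∈ H) ∧
    AlgLE x (l.map (talGen s r hrow)).sum}

section AuxProof

variable {V E : Type*} (s r : E → V)

lemma algLE_refl {M : Type*} [AddCommMonoid M] (a : M) : AlgLE a a :=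
  ⟨0, (add_zero a).symm⟩

lemma algLE_trans {M : Type*} [AddCommMonoid M] {a b c : M}
    (h1 : AlgLE a b) (h2 : AlgLE b c) : AlgLE a c := by
  obtain ⟨x, rfl⟩ := h1; obtain ⟨y, rfl⟩ := h2; exact ⟨x + y, add_assoc _ _ _⟩

lemma algLE_add {M : Type*} [AddCommMonoid M] {a b c d : M}
    (h1 : AlgLE a b) (h2 : AlgLE c d) : AlgLE (a + c) (b + d) := by
  obtain ⟨x, rfl⟩ := h1; obtain ⟨y, rfl⟩ := h2; exact ⟨x + y, by abel⟩

lemma algLE_listSum {α M : Type*} [AddCommMonoid M] (l : List α) (f g : α → M)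
    (h : ∀ a ∈ l, AlgLE (f a) (g a)) :
    AlgLE (l.map f).sum (l.map g).sum := by
  induction l with
  | nil => exact algLE_refl _
  | cons a l ih =>
    simp only [List.map_cons, List.sum_cons]
    exact algLE_add (h a (by simp)) (ih fun b hb => h b (by simp [hb]))

lemma pathTo_append {u m v : V} {l₁ l₂ : List E}
    (h₁ : PathTo s r u m l₁) (h₂ : PathTo s r m v l₂) :
    PathTo s r u v (l₁ ++ l₂) := by
  induction h₁ with
  | nil => simpa
  | cons e h ih => exact PathTo.cons e (ih h₂)

lemma pathTo_split {u v : V} {l₁ l₂ : List E}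
    (h : PathTo s r u v (l₁ ++ l₂)) :
    ∃ m, PathTo s r u m l₁ ∧ PathTo s r m v l₂ := by
  induction l₁ generalizing u with
  | nil => exact ⟨u, PathTo.nil u, h⟩
  | cons e l ih =>
    cases h with
    | cons _ h' =>
      obtain ⟨m, hm1, hm2⟩ := ih h'
      exact ⟨m, PathTo.cons e hm1, hm2⟩

lemma cycle_reach {c : List E} (hc : IsCycle s r c) {e : E} (he : e ∈ c) :
    Reach s r (r e) (s e) := by
  obtain ⟨x, hne, hpath, -⟩ := hc
  obtain ⟨c₁, c₂, rfl⟩ := List.append_of_mem he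
  obtain ⟨m, h1, h2⟩ := pathTo_split s r hpath
  cases h2 with
  | cons _ h2' => exact ⟨c₂ ++ c₁, pathTo_append s r h2' h1⟩

variable (hrow : ∀ v : V, {e : E | s e = v}.Finite)

lemma talGen_eq_sum (v : V) (i : ℤ) (hv : ∃ e, s e = v) :
    talGen s r hrow (v, i) =
      ∑ e ∈ (hrow v).toFinset, talGen s r hrow (r e, i + 1) := by
  have h : talCon s r hrow (Finsupp.single (v, i) 1)
      (∑ e ∈ (hrow v).toFinset, Finsupp.single (r e, i + 1) 1) :=
    AddConGen.Rel.of _ _ ⟨v, i, hv, rfl, rfl⟩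
  calc talGen s r hrow (v, i)
      = (talCon s r hrow).mk' (∑ e ∈ (hrow v).toFinset, Finsupp.single (r e, i + 1) 1) :=
        (talCon s r hrow).eq.mpr h
    _ = _ := map_sum _ _ _

lemma talGen_range_le (e : E) (i : ℤ) :
    AlgLE (talGen s r hrow (r e, i + 1)) (talGen s r hrow (s e, i)) := by
  classical
  have hmem : e ∈ (hrow (s e)).toFinset := by simp
  refine ⟨∑ e' ∈ ((hrow (s e)).toFinset).erase e, talGen s r hrow (r e', i + 1), ?_⟩
  rw [talGen_eq_sum s r hrow (s e) i ⟨e, rfl⟩, ← Finset.add_sum_erase _ _ hmem]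

lemma talGen_le_of_path {u x : V} {l : List E} (h : PathTo s r u x l) (i : ℤ) :
    AlgLE (talGen s r hrow (x, i + l.length)) (talGen s r hrow (u, i)) := by
  induction h generalizing i with
  | nil v => simpa using algLE_refl _
  | @cons e x' l' h ih =>
    have key : i + ((e :: l').length : ℤ) = (i + 1) + (l'.length : ℤ) := by
      push_cast [List.length_cons]; ring
    rw [key]
    exact algLE_trans (ih (i + 1)) (talGen_range_le s r hrow e i)

open Classical in
noncomputable def freeWeight (H : Set V) : FreeTal V →+ ℕ∞ :=
  Finsupp.liftAddHom fun p => multiplesHom ℕ∞ (if p.1 ∈ H then 0 else ⊤)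

lemma exists_weight (H : Set V) (hH : Hereditary s r H) (hS : Saturated s r H) :
    ∃ φ : TalMon s r hrow →+ ℕ∞,
      (∀ p : V × ℤ, p.1 ∈ H → φ (talGen s r hrow p) = 0) ∧
      (∀ p : V × ℤ, p.1 ∉ H → φ (talGen s r hrow p) = ⊤) := by
  classical
  have key : ∀ p : V × ℤ, freeWeight (V := V) H (Finsupp.single p 1) =
      if p.1 ∈ H then 0 else ⊤ := by
    intro p; simp [freeWeight]
  have hrel : ∀ x y, talRel s r hrow x y → freeWeight (V := V) H x = freeWeight H y := by
    rintro x y ⟨v, i, hreg, rfl, rfl⟩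
    rw [key, map_sum]
    simp only [key]
    by_cases hv : v ∈ H
    · rw [if_pos hv, Finset.sum_eq_zero]
      intro e he
      have hse : s e = v := by simpa using he
      rw [if_pos (hH e (by rw [hse]; exact hv))]
    · rw [if_neg hv]
      have hex : ∃ e, s e = v ∧ r e ∉ H := by
        by_contra hc
        push_neg at hc
        exact hv (hS v hreg hc)
      obtain ⟨e, he, hre⟩ := hex
      have hmem : e ∈ (hrow v).toFinset := by simpa using he
      refine (top_le_iff.mp ?_).symm
      calc (⊤ : ℕ∞) = (if r e ∈ H then (0 : ℕ∞) else ⊤) := by rw [if_neg hre]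
        _ ≤ _ := Finset.single_le_sum (f := fun e' => if r e' ∈ H then (0 : ℕ∞) else ⊤)
              (fun _ _ => zero_le) hmem
  have hle : talCon s r hrow ≤ AddCon.ker (freeWeight (V := V) H) :=
    AddCon.addConGen_le.mpr fun x y h => hrel x y h
  have happ : ∀ p : V × ℤ,
      ((talCon s r hrow).lift _ hle) (talGen s r hrow p) =
        if p.1 ∈ H then 0 else ⊤ := by
    intro p
    rw [← key p]
    rfl
  refine ⟨(talCon s r hrow).lift _ hle, fun p hp => ?_, fun p hp => ?_⟩
  · rw [happ p, if_pos hp]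
  · rw [happ p, if_neg hp]

lemma reach_of_mem_ideal (v w : V)
    (hw : (¬ ∃ e, s e = w) ∨ ∃ c : List E, IsCycle s r c ∧ ∃ e ∈ c, s e = w)
    (hmem : talGen s r hrow (w, 0) ∈ genIdeal s r hrow {v}) :
    Reach s r v w := by
  by_contra hnr
  set H : Set V := {u | ¬ Reach s r u w} with hHdef
  have hH : Hereditary s r H := by
    intro e he hre
    obtain ⟨l, hl⟩ := hre
    exact he ⟨e :: l, PathTo.cons e hl⟩
  have hS : Saturated s r H := by
    intro u hreg hall hre
    obtain ⟨l, hl⟩ := hre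
    cases hl with
    | nil =>
      rcases hw with h | ⟨c, hc, e, hec, hes⟩
      · exact h hreg
      · have hr := cycle_reach s r hc hec
        rw [hes] at hr
        exact hall e hes hr
    | cons e hl' =>
      exact hall e rfl ⟨_, hl'⟩
  have hvH : v ∈ H := hnr
  have hwH : w ∉ H := fun h => h ⟨[], PathTo.nil w⟩
  obtain ⟨φ, hφ0, hφt⟩ := exists_weight s r hrow H hH hS
  obtain ⟨l, hl, c, hc⟩ := hmem
  have h2 : φ ((l.map (talGen s r hrow)).sum) = 0 := by
    rw [map_list_sum, List.map_map]
    apply List.sum_eq_zero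
    intro x hx
    obtain ⟨p, hp, rfl⟩ := List.mem_map.mp hx
    show φ (talGen s r hrow p) = 0
    have hpv : p.1 ∈ ({v} : Set V) := hl p hp
    rw [Set.mem_singleton_iff] at hpv
    exact hφ0 p (hpv ▸ hvH)
  rw [hc, map_add, hφt (w, 0) hwH] at h2
  simp at h2

lemma ideal_subset_of_reach {v w : V} (hr : Reach s r w v) :
    genIdeal s r hrow {v} ⊆ genIdeal s r hrow {w} := by
  obtain ⟨L, hL⟩ := hr
  rintro x ⟨l, hl, hx⟩
  refine ⟨l.map (fun p => (w, p.2 - L.length)), ?_, ?_⟩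
  · intro p hp
    obtain ⟨q, hq, rfl⟩ := List.mem_map.mp hp
    rfl
  rw [List.map_map]
  refine algLE_trans hx (algLE_listSum l _ _ ?_)
  rintro ⟨a, n⟩ hp
  have hpv : a = v := hl (a, n) hp
  subst hpv
  have h := talGen_le_of_path s r hrow hL (n - L.length)
  have heq : (n - (L.length : ℤ)) + (L.length : ℤ) = n := by ring
  rw [heq] at h
  simpa using h

end AuxProof

theorem stmt_18 {V E : Type*} [Finite V] [Finite E] (s r : E → V)
    (hrow : ∀ v : V, {e : E | s e = v}.Finite)
    (v w : V)
    (hv : (¬ ∃ e, s e = v) ∨ ∃ c : List E, IsCycle s r c ∧ ∃ e ∈ c, s e = v)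
    (hw : (¬ ∃ e, s e = w) ∨ ∃ c : List E, IsCycle s r c ∧ ∃ e ∈ c, s e = w) :
    genIdeal s r hrow {v} = genIdeal s r hrow {w} ↔
      (Reach s r v w ∧ Reach s r w v) := by
  constructor
  · intro hEq
    have hmemw : talGen s r hrow (w, 0) ∈ genIdeal s r hrow {w} :=
      ⟨[(w, 0)], by simp, by simpa using algLE_refl _⟩
    have hmemv : talGen s r hrow (v, 0) ∈ genIdeal s r hrow {v} :=
      ⟨[(v, 0)], by simp, by simpa using algLE_refl _⟩
    exact ⟨reach_of_mem_ideal s r hrow v w hw (hEq ▸ hmemw),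
      reach_of_mem_ideal s r hrow w v hv (hEq ▸ hmemv)⟩
  · rintro ⟨h1, h2⟩
    exact Set.Subset.antisymm (ideal_subset_of_reach s r hrow h2)
      (ideal_subset_of_reach s r hrow h1)
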